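/- Let G be a graph, H obtained from G by substituting complete graphs C_1,...,C_n for the vertices v_1,...,v_n of G, and let H' be a minimal chordal completion of H. Then for every i and every x, y ∈ C_i, we have N_{H'}(x) ∪ {x} = N_{H'}(y) ∪ {y}; in particular, H' is itself obtained from some graph on {v_1,...,v_n} by substituting the cliques C_1,...,C_n. -/

import Mathlib

open SimpleGraph

/-- `f : ZMod n → V` traces an induced cycle of length `n` in `G`:
`f` is injective and adjacency holds exactly between consecutive vertices. -/
def IsInducedCycle {V : Type*} (G : SimpleGraph V) (n : ℕ) (f : ZMod n → V) : Prop :=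
  Function.Injective f ∧ ∀ i j : ZMod n, G.Adj (f i) (f j) ↔ (j = i + 1 ∨ i = j + 1)

/-- A graph is chordal if it has no induced cycle of length at least 4. -/
def Chordal {V : Type*} (G : SimpleGraph V) : Prop :=
  ∀ n, 4 ≤ n → ∀ f : ZMod n → V, ¬ IsInducedCycle G n f

/-- `G'` is a chordal completion of `G`. -/
def ChordalCompletion {V : Type*} (G G' : SimpleGraph V) : Prop :=
  Chordal G' ∧ G ≤ G'

/-- Minimal chordal completion: no proper spanning subgraph containing `G` is chordal. -/
def MinimalChordalCompletion {V : Type*} (G G' : SimpleGraph V) : Prop :=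
  ChordalCompletion G G' ∧ ∀ H, ChordalCompletion G H → H ≤ G' → H = G'

/-- The graph obtained from `G` by substituting, for each vertex `i`,
the complete graph on `C i`. -/
def blowup {V : Type*} (G : SimpleGraph V) (C : V → Type*) :
    SimpleGraph (Σ i, C i) where
  Adj x y := G.Adj x.1 y.1 ∨ (x.1 = y.1 ∧ x ≠ y)
  symm := by
    constructor
    rintro x y (h | ⟨h1, h2⟩)
    · exact Or.inl h.symm
    · exact Or.inr ⟨h1.symm, h2.symm⟩
  loopless := by
    constructor
    rintro x (h | ⟨_, h2⟩)
    · exact G.irrefl h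
    · exact h2 rfl

lemma zmod_val_eq_iff {m : ℕ} [NeZero m] (i j : ZMod m) : i = j ↔ i.val = j.val :=
  ⟨fun h => h ▸ rfl, fun h => ZMod.val_injective m h⟩

lemma zmod_succ_iff {m : ℕ} (hm : 2 ≤ m) (i j : ZMod m) :
    j = i + 1 ↔ j.val = (i.val + 1) % m := by
  haveI : NeZero m := ⟨by omega⟩
  haveI : Fact (1 < m) := ⟨by omega⟩
  rw [zmod_val_eq_iff, ZMod.val_add, ZMod.val_one]

lemma mod_succ_split {m x : ℕ} (hx : x < m) :
    (x + 1) % m = if x + 1 = m then 0 else x + 1 := by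
  split
  · next h => rw [h, Nat.mod_self]
  · next h => exact Nat.mod_eq_of_lt (by omega)

lemma cast_succ_iff {n s t : ℕ} (hs : s < n) (ht : t < n) (ht0 : 0 < t) :
    ((t : ZMod n) = (s : ZMod n) + 1) ↔ t = s + 1 := by
  haveI : NeZero n := ⟨by omega⟩
  rw [zmod_succ_iff (by omega), ZMod.val_cast_of_lt hs, ZMod.val_cast_of_lt ht,
    mod_succ_split hs]
  split
  · next h => omega
  · next h => exact Iff.rfl

lemma cast_back {n : ℕ} [NeZero n] (j : ZMod n) : ((j.val : ℕ) : ZMod n) = j :=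
  ZMod.val_injective n (by rw [ZMod.val_cast_of_lt (ZMod.val_lt j)])

lemma fan_lemma {W : Type*} {G : SimpleGraph W} (hG : Chordal G) {n : ℕ} (hn : 4 ≤ n)
    {f : ZMod n → W} (finj : Function.Injective f)
    (hadj : ∀ i j : ZMod n, (j = i + 1 ∨ i = j + 1) → G.Adj (f i) (f j))
    (hnadj : ∀ i j : ZMod n, i ≠ 0 → j ≠ 0 → G.Adj (f i) (f j) → (j = i + 1 ∨ i = j + 1))
    {b : W} (hb : ∀ k, f k ≠ b)
    (hb1 : G.Adj b (f ((1 : ℕ) : ZMod n))) (hbn : G.Adj b (f ((n - 1 : ℕ) : ZMod n))) :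
    ∀ j : ZMod n, j ≠ 0 → G.Adj b (f j) := by
  classical
  haveI : NeZero n := ⟨by omega⟩
  set P : ℕ → Prop := fun r => G.Adj b (f ((r : ℕ) : ZMod n)) with hP
  have hmain : ∀ r : ℕ, 1 ≤ r → r ≤ n - 1 → P r := by
    by_contra hcon
    push_neg at hcon
    obtain ⟨r, hr1, hrn, hPr⟩ := hcon
    -- p : largest index ≤ r with P p
    set p := Nat.findGreatest P r with hpdef
    have hPp : P p := Nat.findGreatest_spec hr1 hb1
    have hp1 : 1 ≤ p := Nat.le_findGreatest hr1 hb1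
    have hpr : p < r := lt_of_le_of_ne (Nat.findGreatest_le r) (fun h => hPr (h ▸ hPp))
    -- q : smallest index > r with P q
    have hrn' : r < n - 1 := by
      rcases lt_or_eq_of_le hrn with h | h
      · exact h
      · exact absurd (h ▸ hbn) hPr
    have hex : ∃ s, r < s ∧ P s := ⟨n - 1, hrn', hbn⟩
    set q := Nat.find hex with hqdef
    obtain ⟨hrq, hPq⟩ := Nat.find_spec hex
    have hqn : q ≤ n - 1 := Nat.find_min' hex ⟨hrn', hbn⟩
    have hgap : ∀ s, p < s → s < q → ¬ P s := by
      intro s hs1 hs2 hPs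
      rcases le_or_gt s r with h | h
      · exact Nat.findGreatest_is_greatest hs1 h hPs
      · exact Nat.find_min hex hs2 ⟨h, hPs⟩
    set d := q - p with hddef
    have hd2 : 2 ≤ d := by omega
    set m := d + 2 with hmdef
    haveI : NeZero m := ⟨by omega⟩
    -- the cycle
    set c : ZMod m → W := fun k => if k.val = 0 then b else f ((p + k.val - 1 : ℕ) : ZMod n)
      with hc
    have hrange : ∀ k : ZMod m, k.val ≠ 0 → p + k.val - 1 < n ∧ 1 ≤ p + k.val - 1 ∧
        p ≤ p + k.val - 1 ∧ p + k.val - 1 ≤ q := by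
      intro k hk
      have := ZMod.val_lt k
      omega
    have hcinj : Function.Injective c := by
      intro k k' hkk'
      rw [hc] at hkk'
      simp only at hkk'
      rw [zmod_val_eq_iff]
      by_cases h1 : k.val = 0 <;> by_cases h2 : k'.val = 0
      · omega
      · rw [if_pos h1, if_neg h2] at hkk'; exact absurd hkk'.symm (hb _)
      · rw [if_neg h1, if_pos h2] at hkk'; exact absurd hkk' (hb _)
      · rw [if_neg h1, if_neg h2] at hkk'
        have := finj hkk'
        have e := congrArg ZMod.val this
        rw [ZMod.val_cast_of_lt (hrange k h1).1, ZMod.val_cast_of_lt (hrange k' h2).1] at e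
        omega
    have hP_iff : ∀ s : ℕ, p ≤ s → s ≤ q → (P s ↔ (s = p ∨ s = q)) := by
      intro s hs1 hs2
      constructor
      · intro hs
        by_contra hcon
        push_neg at hcon
        exact hgap s (by omega) (by omega) hs
      · rintro (rfl | rfl) <;> assumption
    -- adjacency characterization
    have hadj_bf : ∀ s : ℕ, p ≤ s → s ≤ q → (G.Adj b (f ((s : ℕ) : ZMod n)) ↔ (s = p ∨ s = q)) :=
      fun s h1 h2 => hP_iff s h1 h2
    have hadj_ff : ∀ s t : ℕ, p ≤ s → s ≤ q → p ≤ t → t ≤ q →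
        (G.Adj (f ((s : ℕ) : ZMod n)) (f ((t : ℕ) : ZMod n)) ↔ (t = s + 1 ∨ s = t + 1)) := by
      intro s t hs1 hs2 ht1 ht2
      have hsn : s < n := by omega
      have htn : t < n := by omega
      have hs0 : ((s : ℕ) : ZMod n) ≠ 0 := by
        intro h
        have := congrArg ZMod.val h
        rw [ZMod.val_cast_of_lt hsn, ZMod.val_zero] at this
        omega
      have ht0 : ((t : ℕ) : ZMod n) ≠ 0 := by
        intro h
        have := congrArg ZMod.val h
        rw [ZMod.val_cast_of_lt htn, ZMod.val_zero] at this
        omega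
      constructor
      · intro hA
        rcases hnadj _ _ hs0 ht0 hA with h | h
        · left; exact (cast_succ_iff hsn htn (by omega)).1 h
        · right; exact (cast_succ_iff htn hsn (by omega)).1 h
      · rintro (h | h)
        · exact hadj _ _ (Or.inl ((cast_succ_iff hsn htn (by omega)).2 h))
        · exact hadj _ _ (Or.inr ((cast_succ_iff htn hsn (by omega)).2 h))
    have hcycle : IsInducedCycle G m c := by
      refine ⟨hcinj, fun i j => ?_⟩
      have hvi := ZMod.val_lt i
      have hvj := ZMod.val_lt j
      rw [zmod_succ_iff (by omega) i j, zmod_succ_iff (by omega) j i,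
        mod_succ_split hvi, mod_succ_split hvj]
      rw [hc]
      simp only
      by_cases h1 : i.val = 0 <;> by_cases h2 : j.val = 0
      · rw [if_pos h1, if_pos h2]
        simp only [SimpleGraph.irrefl]
        constructor
        · intro h; exact h.elim
        · rintro (h | h) <;> split at h <;> omega
      · rw [if_pos h1, if_neg h2]
        obtain ⟨hr1, hr2, hr3, hr4⟩ := hrange j h2
        rw [hadj_bf _ hr3 hr4]
        constructor
        · rintro (h | h)
          · left; split <;> omega
          · right; split <;> omega
        · rintro (h | h) <;> [skip; skip] <;> split at h <;> omega
      · rw [if_neg h1, if_pos h2]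
        obtain ⟨hr1, hr2, hr3, hr4⟩ := hrange i h1
        rw [SimpleGraph.adj_comm, hadj_bf _ hr3 hr4]
        constructor
        · rintro (h | h)
          · right; split <;> omega
          · left; split <;> omega
        · rintro (h | h) <;> split at h <;> omega
      · rw [if_neg h1, if_neg h2]
        obtain ⟨hi1, hi2, hi3, hi4⟩ := hrange i h1
        obtain ⟨hj1, hj2, hj3, hj4⟩ := hrange j h2
        rw [hadj_ff _ _ hi3 hi4 hj3 hj4]
        constructor
        · rintro (h | h)
          · left; split <;> omega
          · right; split <;> omega
        · rintro (h | h) <;> split at h <;> omega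
    exact hG m (by omega) c hcycle
  intro j hj
  have hjv : 1 ≤ j.val := by
    rcases Nat.eq_zero_or_pos j.val with h | h
    · exact absurd ((ZMod.val_eq_zero j).1 h) hj
    · exact h
  have := hmain j.val hjv (by have := ZMod.val_lt j; omega)
  rwa [hP, cast_back j] at this

def modG {W : Type*} (H' : SimpleGraph W) (a b : W) : SimpleGraph W where
  Adj u v := H'.Adj u v ∧ (u = a → (v = b ∨ H'.Adj b v)) ∧ (v = a → (u = b ∨ H'.Adj b u))
  symm := ⟨fun u v ⟨h1, h2, h3⟩ => ⟨h1.symm, h3, h2⟩⟩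
  loopless := ⟨fun u h => H'.loopless.irrefl u h.1⟩

lemma modG_le {W : Type*} (H' : SimpleGraph W) (a b : W) : modG H' a b ≤ H' :=
  fun _ _ h => h.1

lemma modG_adj_of_ne {W : Type*} {H' : SimpleGraph W} {a b u v : W}
    (hu : u ≠ a) (hv : v ≠ a) : (modG H' a b).Adj u v ↔ H'.Adj u v :=
  ⟨fun h => h.1, fun h => ⟨h, fun h' => absurd h' hu, fun h' => absurd h' hv⟩⟩

lemma modG_adj_ab {W : Type*} {H' : SimpleGraph W} {a b : W} (hab : H'.Adj a b) :
    (modG H' a b).Adj a b :=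
  ⟨hab, fun _ => Or.inl rfl, fun h => Or.inl h.symm⟩

lemma zmod_cast_inj {n : ℕ} {s t : ℕ} (hs : s < n) (ht : t < n)
    (h : (s : ZMod n) = (t : ZMod n)) : s = t := by
  haveI : NeZero n := ⟨by omega⟩
  have := congrArg ZMod.val h
  rwa [ZMod.val_cast_of_lt hs, ZMod.val_cast_of_lt ht] at this

lemma neg_one_cast {n : ℕ} (hn : 1 ≤ n) : ((n - 1 : ℕ) : ZMod n) = -1 := by
  have : ((n - 1 : ℕ) : ZMod n) = ((n : ℕ) : ZMod n) - 1 := by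
    rw [Nat.cast_sub hn, Nat.cast_one]
  rw [this, ZMod.natCast_self]
  ring

lemma core_case2 {W : Type*} {H' : SimpleGraph W} {a b : W} (hH : Chordal H')
    {n : ℕ} (hn : 4 ≤ n) {f : ZMod n → W}
    (hf : IsInducedCycle (modG H' a b) n f) (hf0 : f 0 = a) (hf1 : f 1 = b) : False := by
  haveI : NeZero n := ⟨by omega⟩
  obtain ⟨finj, fadj⟩ := hf
  have e1 : ((n - 1 : ℕ) : ZMod n) = -1 := neg_one_cast (by omega)
  have hm1 : (-1 : ZMod n) ≠ 1 := by
    rw [← e1, show (1 : ZMod n) = ((1:ℕ) : ZMod n) by norm_num]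
    intro h; have := zmod_cast_inj (by omega) (by omega) h; omega
  have hm0 : (-1 : ZMod n) ≠ 0 := by
    rw [← e1, show (0 : ZMod n) = ((0:ℕ) : ZMod n) by norm_num]
    intro h; have := zmod_cast_inj (by omega) (by omega) h; omega
  have hm2 : (-1 : ZMod n) ≠ 2 := by
    rw [← e1, show (2 : ZMod n) = ((2:ℕ) : ZMod n) by norm_num]
    intro h; have := zmod_cast_inj (by omega) (by omega) h; omega
  have h10 : (1 : ZMod n) ≠ 0 := by
    rw [show (1 : ZMod n) = ((1:ℕ) : ZMod n) by norm_num,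
      show (0 : ZMod n) = ((0:ℕ) : ZMod n) by norm_num]
    intro h; have := zmod_cast_inj (by omega) (by omega) h; omega
  -- f 0 adjacent to f (-1) in modG
  have h01 : (modG H' a b).Adj (f 0) (f (-1)) := (fadj 0 (-1)).2 (Or.inr (by ring))
  have hbm1 : H'.Adj b (f (-1)) := by
    rcases h01.2.1 hf0 with h | h
    · exact absurd (finj (h.trans hf1.symm)) hm1
    · exact h
  -- but f 1 and f (-1) are not adjacent in modG, hence not in H'
  have hne1 : f 1 ≠ a := fun h => h10 (finj (h.trans hf0.symm))
  have hnem : f (-1) ≠ a := fun h => hm0 (finj (h.trans hf0.symm))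
  have : ¬ (modG H' a b).Adj (f 1) (f (-1)) := by
    rw [fadj]
    rintro (h | h)
    · exact hm2 (by linear_combination h)
    · exact h10 (by linear_combination h)
  rw [modG_adj_of_ne hne1 hnem] at this
  exact this (hf1 ▸ hbm1)

lemma cycle_shift {W : Type*} {G : SimpleGraph W} {n : ℕ} {f : ZMod n → W}
    (hf : IsInducedCycle G n f) (k : ZMod n) :
    IsInducedCycle G n (fun i => f (i + k)) := by
  obtain ⟨hinj, hadj⟩ := hf
  refine ⟨fun i j hij => ?_, fun i j => ?_⟩
  · have := hinj hij; exact add_right_cancel this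
  · rw [hadj]
    constructor
    · rintro (h | h)
      · left; have : j = i + k + 1 - k := by rw [← h]; ring
        rw [this]; ring
      · right; have : i = j + k + 1 - k := by rw [← h]; ring
        rw [this]; ring
    · rintro (h | h)
      · left; rw [h]; ring
      · right; rw [h]; ring

lemma cycle_rev {W : Type*} {G : SimpleGraph W} {n : ℕ} {f : ZMod n → W}
    (hf : IsInducedCycle G n f) :
    IsInducedCycle G n (fun i => f (-i)) := by
  obtain ⟨hinj, hadj⟩ := hf
  refine ⟨fun i j hij => ?_, fun i j => ?_⟩
  · have := hinj hij; exact neg_injective this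
  · rw [hadj]
    constructor
    · rintro (h | h)
      · right; linear_combination h
      · left; linear_combination h
    · rintro (h | h)
      · right; linear_combination h
      · left; linear_combination h

lemma modG_chordal {W : Type*} {H' : SimpleGraph W} {a b : W} (hH : Chordal H')
    (hab : H'.Adj a b) : Chordal (modG H' a b) := by
  intro n hn f hf
  haveI : NeZero n := ⟨by omega⟩
  by_cases ha : ∀ k, f k ≠ a
  · exact hH n hn f ⟨hf.1, fun i j => by
      rw [← modG_adj_of_ne (ha i) (ha j)]; exact hf.2 i j⟩
  · push_neg at ha
    obtain ⟨k, hk⟩ := ha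
    have hg : IsInducedCycle (modG H' a b) n (fun i => f (i + k)) := cycle_shift hf k
    set g : ZMod n → W := fun i => f (i + k) with hgdef
    have hg0 : g 0 = a := by rw [hgdef]; simpa using hk
    obtain ⟨ginj, gadj⟩ := hg
    have h10 : (1 : ZMod n) ≠ 0 := by
      rw [show (1 : ZMod n) = ((1:ℕ) : ZMod n) by norm_num,
        show (0 : ZMod n) = ((0:ℕ) : ZMod n) by norm_num]
      intro h; have := zmod_cast_inj (by omega) (by omega) h; omega
    by_cases hbr : ∀ k', g k' ≠ b
    · -- b not on the cycle
      have hne : ∀ i : ZMod n, i ≠ 0 → g i ≠ a := by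
        intro i hi h
        exact hi (ginj (h.trans hg0.symm))
      have hb1 : H'.Adj b (g ((1:ℕ) : ZMod n)) := by
        have h1 : (modG H' a b).Adj (g 0) (g 1) := (gadj 0 1).2 (Or.inl (by ring))
        rcases h1.2.1 hg0 with h | h
        · exact absurd h (hbr 1)
        · rw [show ((1:ℕ) : ZMod n) = 1 by norm_num]; exact h
      have hbn : H'.Adj b (g ((n-1:ℕ) : ZMod n)) := by
        have h1 : (modG H' a b).Adj (g 0) (g (-1)) := (gadj 0 (-1)).2 (Or.inr (by ring))
        rcases h1.2.1 hg0 with h | h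
        · exact absurd h (hbr (-1))
        · rw [neg_one_cast (by omega)]; exact h
      have hfan : ∀ j : ZMod n, j ≠ 0 → H'.Adj b (g j) :=
        fan_lemma hH hn ginj
          (fun i j hij => ((gadj i j).2 hij).1)
          (fun i j hi hj hA => (gadj i j).1 ((modG_adj_of_ne (hne i hi) (hne j hj)).2 hA))
          hbr hb1 hbn
      -- g is then an induced cycle in H' itself
      apply hH n hn g
      refine ⟨ginj, fun i j => ?_⟩
      rw [← gadj i j]
      constructor
      · intro hA
        refine ⟨hA, fun hi => ?_, fun hj => ?_⟩
        · have hi0 : i = 0 := ginj (hi.trans hg0.symm)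
          have hj0 : j ≠ 0 := by
            intro h; rw [hi0, h] at hA; exact H'.loopless.irrefl _ hA
          exact Or.inr (hfan j hj0)
        · have hj0 : j = 0 := ginj (hj.trans hg0.symm)
          have hi0 : i ≠ 0 := by
            intro h; rw [hj0, h] at hA; exact H'.loopless.irrefl _ hA
          exact Or.inr (hfan i hi0)
      · exact fun h => h.1
    · push_neg at hbr
      obtain ⟨k', hk'⟩ := hbr
      have hadjab : (modG H' a b).Adj (g 0) (g k') := by
        rw [hg0, hk']; exact modG_adj_ab hab
      rcases (gadj 0 k').1 hadjab with h | h
      · have hk1 : k' = 1 := by rw [h]; ring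
        exact core_case2 hH hn ⟨ginj, gadj⟩ hg0 (hk1 ▸ hk')
      · have hk1 : k' = -1 := by linear_combination -h
        refine core_case2 hH hn (cycle_rev ⟨ginj, gadj⟩) ?_ ?_
        · show g (-0) = a
          rw [neg_zero]; exact hg0
        · show g (-1) = b
          rw [← hk1]; exact hk'

-- the blowup is below modG
lemma blowup_le_modG {V : Type*} {G : SimpleGraph V} {C : V → Type*}
    {H' : SimpleGraph (Σ i, C i)} (hle : blowup G C ≤ H') {a b : Σ i, C i}
    (hab : a.1 = b.1) : blowup G C ≤ modG H' a b := by
  intro u v huv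
  refine ⟨hle huv, fun hu => ?_, fun hv => ?_⟩
  · subst hu
    rcases huv with h | ⟨h1, h2⟩
    · exact Or.inr (hle (Or.inl (hab ▸ h)))
    · by_cases hvb : v = b
      · exact Or.inl hvb
      · exact Or.inr (hle (Or.inr ⟨hab ▸ h1, Ne.symm hvb⟩))
  · subst hv
    rcases huv with h | ⟨h1, h2⟩
    · exact Or.inr (hle (Or.inl (hab ▸ h.symm)))
    · by_cases hub : u = b
      · exact Or.inl hub
      · exact Or.inr (hle (Or.inr ⟨hab ▸ h1.symm, Ne.symm hub⟩))

def quotG {V : Type*} {C : V → Type*} (H' : SimpleGraph (Σ i, C i)) : SimpleGraph V where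
  Adj i j := i ≠ j ∧ ∃ x y, H'.Adj ⟨i, x⟩ ⟨j, y⟩
  symm := by constructor; rintro i j ⟨h1, x, y, h2⟩; exact ⟨h1.symm, y, x, h2.symm⟩
  loopless := by constructor; rintro i ⟨h1, -⟩; exact h1 rfl

lemma key_subset {V : Type*} {G : SimpleGraph V} {C : V → Type*}
    {H' : SimpleGraph (Σ i, C i)} (h : MinimalChordalCompletion (blowup G C) H')
    (a b : Σ i, C i) (hab : a.1 = b.1) :
    H'.neighborSet a ∪ {a} ⊆ H'.neighborSet b ∪ {b} := by
  by_cases hne : a = b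
  · subst hne; exact Set.Subset.rfl
  have hadjab : H'.Adj a b := h.1.2 (Or.inr ⟨hab, hne⟩)
  have hcc : ChordalCompletion (blowup G C) (modG H' a b) :=
    ⟨modG_chordal h.1.1 hadjab, blowup_le_modG h.1.2 hab⟩
  have heq : modG H' a b = H' := h.2 _ hcc (modG_le H' a b)
  intro c hc
  rcases hc with hc | hc
  · -- c is an H'-neighbor of a
    have : (modG H' a b).Adj a c := by rw [heq]; exact hc
    rcases this.2.1 rfl with h' | h'
    · exact Or.inr h'
    · exact Or.inl h'
  · -- c = a
    rcases hc with rfl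
    exact Or.inl hadjab.symm

theorem stmt_10 {V : Type*} [Fintype V] (G : SimpleGraph V)
    (C : V → Type*) [∀ i, Nonempty (C i)] [∀ i, Fintype (C i)]
    (H' : SimpleGraph (Σ i, C i))
    (h : MinimalChordalCompletion (blowup G C) H') :
    (∀ (i : V) (x y : C i),
        H'.neighborSet ⟨i, x⟩ ∪ {⟨i, x⟩} = H'.neighborSet ⟨i, y⟩ ∪ {⟨i, y⟩}) ∧
    ∃ G'' : SimpleGraph V, H' = blowup G'' C := by
  have key : ∀ a b : Σ i, C i, a.1 = b.1 →
      H'.neighborSet a ∪ {a} = H'.neighborSet b ∪ {b} :=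
    fun a b hab => Set.Subset.antisymm (key_subset h a b hab) (key_subset h b a hab.symm)
  constructor
  · intro i x y
    exact key ⟨i, x⟩ ⟨i, y⟩ rfl
  · refine ⟨quotG H', ?_⟩
    ext u v
    show H'.Adj u v ↔ _
    rw [blowup, quotG]
    simp only
    obtain ⟨i, x⟩ := u
    obtain ⟨j, y⟩ := v
    constructor
    · intro hA
      by_cases hij : i = j
      · subst hij
        exact Or.inr ⟨rfl, fun h => H'.loopless.irrefl _ (h ▸ hA)⟩
      · exact Or.inl ⟨hij, x, y, hA⟩
    · rintro (⟨hij, x', y', hA⟩ | ⟨h1, h2⟩)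
      · -- transfer along the blocks using key
        have step1 : H'.Adj ⟨i, x⟩ ⟨j, y'⟩ := by
          have hm : (⟨j, y'⟩ : Σ i, C i) ∈ H'.neighborSet ⟨i, x'⟩ ∪ {⟨i, x'⟩} :=
            Or.inl hA
          rw [key ⟨i, x'⟩ ⟨i, x⟩ rfl] at hm
          rcases hm with hm | hm
          · exact hm
          · exact absurd (congrArg Sigma.fst hm) (by simpa using hij.symm)
        have step2 : H'.Adj ⟨j, y⟩ ⟨i, x⟩ := by
          have hm : (⟨i, x⟩ : Σ i, C i) ∈ H'.neighborSet ⟨j, y'⟩ ∪ {⟨j, y'⟩} :=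
            Or.inl step1.symm
          rw [key ⟨j, y'⟩ ⟨j, y⟩ rfl] at hm
          rcases hm with hm | hm
          · exact hm
          · exact absurd (congrArg Sigma.fst hm) (by simpa using hij)
        exact step2.symm
      · -- same block: comes from the blowup itself
        exact h.1.2 (Or.inr ⟨h1, h2⟩)
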